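/- Let X ~ Binom(m₁, a·log n/n) and R ~ Binom(m₂, b·log n/n) be independent, with a,b > 0. For any integers m₁, m₂, k with k ≤ (m₁a - m₂b)·log n/n, one has P(X - R ≤ k) ≤ n^{-g(m₁/n, m₂/n, a, b, k/log n)}, where for ρ₁,ρ₂ > 0, g(ρ₁,ρ₂,a,b,α) = aρ₁ + bρ₂ - γ - (α/2)·log((γ-α)aρ₁/((γ+α)bρ₂)) with γ = √(α² + 4ρ₁ρ₂ab). -/

import Mathlib

/-- Binomial pmf `P(X = i)` for `X ~ Binom(m, p)`. -/
noncomputable def binomPmf (p : ℝ) (m i : ℕ) : ℝ :=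
  (m.choose i : ℝ) * p ^ i * (1 - p) ^ (m - i)

/-- `P(X - R ≤ k)` for independent `X ~ Binom(m₁,p)`, `R ~ Binom(m₂,q)`. -/
noncomputable def probDiffLE (p q : ℝ) (m₁ m₂ : ℕ) (k : ℤ) : ℝ :=
  ∑ i ∈ Finset.range (m₁ + 1), ∑ j ∈ Finset.range (m₂ + 1),
    if (i : ℤ) - (j : ℤ) ≤ k then binomPmf p m₁ i * binomPmf q m₂ j else 0

lemma binomPmf_nonneg {p : ℝ} (hp0 : 0 ≤ p) (hp1 : p ≤ 1) (m i : ℕ) :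
    0 ≤ binomPmf p m i := by
  have h : (0:ℝ) ≤ 1 - p := by linarith
  unfold binomPmf
  positivity

lemma mgf_binom (p s : ℝ) (m : ℕ) :
    ∑ i ∈ Finset.range (m + 1), binomPmf p m i * s ^ i = (1 - p + p * s) ^ m := by
  have h := add_pow (p * s) (1 - p) m
  rw [show (1:ℝ) - p + p * s = p * s + (1 - p) by ring, h]
  refine Finset.sum_congr rfl fun i hi => ?_
  unfold binomPmf
  rw [mul_pow]
  ring

lemma pow_le_exp_aux (p s : ℝ) (hp0 : 0 ≤ p) (hp1 : p ≤ 1) (hs : 0 ≤ s) (m : ℕ) :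
    (1 - p + p * s) ^ m ≤ Real.exp ((m : ℝ) * (p * (s - 1))) := by
  have h0 : 0 ≤ 1 - p + p * s := by nlinarith
  have h1 : 1 - p + p * s ≤ Real.exp (p * (s - 1)) := by
    have := Real.add_one_le_exp (p * (s - 1))
    linarith
  calc (1 - p + p*s)^m ≤ (Real.exp (p*(s-1)))^m := pow_le_pow_left₀ h0 h1 m
    _ = Real.exp ((m:ℝ) * (p*(s-1))) := by rw [← Real.exp_nat_mul]

lemma chernoff_bound (p q t : ℝ) (m₁ m₂ : ℕ) (k : ℤ)
    (hp0 : 0 ≤ p) (hp1 : p ≤ 1) (hq0 : 0 ≤ q) (hq1 : q ≤ 1) (ht : 0 ≤ t) :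
    probDiffLE p q m₁ m₂ k ≤
      Real.exp (t * (k:ℝ) + (m₁:ℝ) * (p * (Real.exp (-t) - 1))
        + (m₂:ℝ) * (q * (Real.exp t - 1))) := by
  have step1 : probDiffLE p q m₁ m₂ k ≤
      ∑ i ∈ Finset.range (m₁ + 1), ∑ j ∈ Finset.range (m₂ + 1),
        Real.exp (t * (k:ℝ)) * (binomPmf p m₁ i * Real.exp (-t) ^ i) *
          (binomPmf q m₂ j * Real.exp t ^ j) := by
    unfold probDiffLE
    refine Finset.sum_le_sum fun i _ => Finset.sum_le_sum fun j _ => ?_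
    have hx := binomPmf_nonneg hp0 hp1 m₁ i
    have hy := binomPmf_nonneg hq0 hq1 m₂ j
    by_cases hij : (i : ℤ) - (j : ℤ) ≤ k
    · simp only [hij, if_true]
      have hexp : (1:ℝ) ≤ Real.exp (t * (k:ℝ)) * Real.exp (-t) ^ i * Real.exp t ^ j := by
        rw [← Real.exp_nat_mul, ← Real.exp_nat_mul, ← Real.exp_add, ← Real.exp_add]
        apply Real.one_le_exp
        have hij' : (i:ℝ) - (j:ℝ) ≤ (k:ℝ) := by exact_mod_cast hij
        have : t * (k:ℝ) + (i:ℝ) * (-t) + (j:ℝ) * t = t * ((k:ℝ) - (i:ℝ) + (j:ℝ)) := by ring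
        rw [this]
        apply mul_nonneg ht
        linarith
      calc binomPmf p m₁ i * binomPmf q m₂ j
          ≤ (binomPmf p m₁ i * binomPmf q m₂ j) *
            (Real.exp (t * (k:ℝ)) * Real.exp (-t) ^ i * Real.exp t ^ j) :=
            le_mul_of_one_le_right (mul_nonneg hx hy) hexp
        _ = Real.exp (t * (k:ℝ)) * (binomPmf p m₁ i * Real.exp (-t) ^ i) *
            (binomPmf q m₂ j * Real.exp t ^ j) := by ring
    · simp only [hij, if_false]
      positivity
  have step2 : ∑ i ∈ Finset.range (m₁ + 1), ∑ j ∈ Finset.range (m₂ + 1),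
        Real.exp (t * (k:ℝ)) * (binomPmf p m₁ i * Real.exp (-t) ^ i) *
          (binomPmf q m₂ j * Real.exp t ^ j)
      = Real.exp (t * (k:ℝ)) * (1 - p + p * Real.exp (-t)) ^ m₁
          * (1 - q + q * Real.exp t) ^ m₂ := by
    rw [← mgf_binom p (Real.exp (-t)) m₁, ← mgf_binom q (Real.exp t) m₂]
    calc ∑ i ∈ Finset.range (m₁ + 1), ∑ j ∈ Finset.range (m₂ + 1),
          Real.exp (t * (k:ℝ)) * (binomPmf p m₁ i * Real.exp (-t) ^ i) *
            (binomPmf q m₂ j * Real.exp t ^ j)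
        = ∑ i ∈ Finset.range (m₁ + 1),
            Real.exp (t * (k:ℝ)) * (binomPmf p m₁ i * Real.exp (-t) ^ i) *
              ∑ j ∈ Finset.range (m₂ + 1), (binomPmf q m₂ j * Real.exp t ^ j) :=
          Finset.sum_congr rfl fun i _ => by rw [← Finset.mul_sum]
      _ = _ := by rw [← Finset.sum_mul, ← Finset.mul_sum]
  have hA : (1 - p + p * Real.exp (-t)) ^ m₁ ≤ Real.exp ((m₁:ℝ) * (p * (Real.exp (-t) - 1))) :=
    pow_le_exp_aux p _ hp0 hp1 (Real.exp_nonneg _) m₁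
  have hB : (1 - q + q * Real.exp t) ^ m₂ ≤ Real.exp ((m₂:ℝ) * (q * (Real.exp t - 1))) :=
    pow_le_exp_aux q _ hq0 hq1 (Real.exp_nonneg _) m₂
  have h0A : (0:ℝ) ≤ (1 - p + p * Real.exp (-t)) ^ m₁ := by
    have : 0 ≤ 1 - p + p * Real.exp (-t) := by nlinarith [Real.exp_nonneg (-t)]
    positivity
  calc probDiffLE p q m₁ m₂ k
      ≤ Real.exp (t * (k:ℝ)) * (1 - p + p * Real.exp (-t)) ^ m₁
          * (1 - q + q * Real.exp t) ^ m₂ := step1.trans_eq step2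
    _ ≤ Real.exp (t * (k:ℝ)) * Real.exp ((m₁:ℝ) * (p * (Real.exp (-t) - 1)))
          * Real.exp ((m₂:ℝ) * (q * (Real.exp t - 1))) := by
        have h0B : (0:ℝ) ≤ (1 - q + q * Real.exp t) ^ m₂ := by
          have : 0 ≤ 1 - q + q * Real.exp t := by nlinarith [Real.exp_nonneg t]
          positivity
        refine mul_le_mul (mul_le_mul_of_nonneg_left hA (Real.exp_pos _).le) hB h0B ?_
        positivity
    _ = _ := by rw [← Real.exp_add, ← Real.exp_add]

/-- Non-asymptotic Chernoff bound: for independent `X ~ Binom(m₁, a log n/n)` and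
`R ~ Binom(m₂, b log n/n)` and any integer `k ≤ (m₁a - m₂b)·log n/n`,
`P(X - R ≤ k) ≤ n^{-g(m₁/n, m₂/n, a, b, k/log n)}` where
`g(ρ₁,ρ₂,a,b,α) = aρ₁ + bρ₂ - γ - (α/2)·log((γ-α)aρ₁/((γ+α)bρ₂))`,
`γ = √(α² + 4ρ₁ρ₂ab)`. -/
theorem binomial_difference_tail_bound (n m₁ m₂ : ℕ) (k : ℤ) (a b : ℝ)
    (hn : 2 ≤ n) (hm₁ : 0 < m₁) (hm₂ : 0 < m₂) (ha : 0 < a) (hb : 0 < b)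
    (hp : a * Real.log n / n ≤ 1) (hq : b * Real.log n / n ≤ 1)
    (hk : (k : ℝ) ≤ ((m₁ : ℝ) * a - (m₂ : ℝ) * b) * Real.log n / n)
    (ρ₁ ρ₂ α γ g : ℝ)
    (hρ₁ : ρ₁ = (m₁ : ℝ) / n) (hρ₂ : ρ₂ = (m₂ : ℝ) / n)
    (hα : α = (k : ℝ) / Real.log n)
    (hγ : γ = Real.sqrt (α ^ 2 + 4 * ρ₁ * ρ₂ * a * b))
    (hg : g = a * ρ₁ + b * ρ₂ - γ -
      α / 2 * Real.log ((γ - α) * a * ρ₁ / ((γ + α) * b * ρ₂))) :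
    probDiffLE (a * Real.log n / n) (b * Real.log n / n) m₁ m₂ k ≤ (n : ℝ) ^ (-g) := by
  have hn0 : (0:ℝ) < n := by positivity
  have hn1 : (1:ℝ) < n := by exact_mod_cast lt_of_lt_of_le (by norm_num : 1 < 2) hn
  have hL : 0 < Real.log n := Real.log_pos hn1
  set L := Real.log n with hLdef
  have hρ₁pos : 0 < ρ₁ := by rw [hρ₁]; positivity
  have hρ₂pos : 0 < ρ₂ := by rw [hρ₂]; positivity
  -- γ facts
  have hγ2 : γ ^ 2 = α ^ 2 + 4 * ρ₁ * ρ₂ * a * b := by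
    rw [hγ]; exact Real.sq_sqrt (by positivity)
  have hγpos : 0 < γ := by
    rw [hγ]; apply Real.sqrt_pos.mpr; positivity
  have hprod : 0 < 4 * ρ₁ * ρ₂ * a * b := by positivity
  have hγmα : 0 < γ - α := by nlinarith
  have hγpα : 0 < γ + α := by nlinarith
  -- α ≤ ρ₁ a - ρ₂ b
  have hαle : α ≤ ρ₁ * a - ρ₂ * b := by
    have hrw : ((m₁:ℝ) * a - (m₂:ℝ) * b) * L / n = (ρ₁ * a - ρ₂ * b) * L := by
      rw [hρ₁, hρ₂]; field_simp
    rw [hα, div_le_iff₀ hL]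
    calc (k:ℝ) ≤ ((m₁:ℝ) * a - (m₂:ℝ) * b) * L / n := hk
      _ = (ρ₁ * a - ρ₂ * b) * L := hrw
  -- the optimal tilt
  set u : ℝ := (γ - α) / (2 * (ρ₂ * b)) with hu
  have hupos : 0 < u := by positivity
  have hu1 : 1 ≤ u := by
    rw [hu, le_div_iff₀ (by positivity)]
    nlinarith [sq_nonneg (γ + α + 2 * ρ₂ * b), mul_pos hρ₂pos hb]
  set t : ℝ := Real.log u with htdef
  have ht0 : 0 ≤ t := Real.log_nonneg hu1
  have het : Real.exp t = u := Real.exp_log hupos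
  have hent : Real.exp (-t) = 1 / u := by rw [Real.exp_neg, het, one_div]
  -- key identities
  have hAid : ρ₁ * a * (1 / u) = (γ + α) / 2 := by
    rw [hu]
    field_simp
    linear_combination -hγ2
  have hBid : ρ₂ * b * u = (γ - α) / 2 := by
    rw [hu]; field_simp
  have hu2 : u ^ 2 = (γ - α) * a * ρ₁ / ((γ + α) * b * ρ₂) := by
    rw [hu]
    field_simp
    linear_combination hγ2
  have ht2 : t = 1 / 2 * Real.log ((γ - α) * a * ρ₁ / ((γ + α) * b * ρ₂)) := by
    rw [← hu2, htdef]
    rw [show u ^ 2 = u * u by ring, Real.log_mul (ne_of_gt hupos) (ne_of_gt hupos)]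
    ring
  -- p, q in [0,1]
  have hp0 : 0 ≤ a * L / n := by positivity
  have hq0 : 0 ≤ b * L / n := by positivity
  -- main bound
  have hbound := chernoff_bound (a * L / n) (b * L / n) t m₁ m₂ k hp0 hp hq0 hq ht0
  rw [hent, het] at hbound
  refine hbound.trans_eq ?_
  -- exponent computation
  have hkL : (k:ℝ) = α * L := by rw [hα]; field_simp
  have hm1p : (m₁:ℝ) * (a * L / n) = ρ₁ * a * L := by rw [hρ₁]; field_simp
  have hm2q : (m₂:ℝ) * (b * L / n) = ρ₂ * b * L := by rw [hρ₂]; field_simp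
  have hE : t * (k:ℝ) + (m₁:ℝ) * (a * L / n * (1 / u - 1))
      + (m₂:ℝ) * (b * L / n * (u - 1)) = L * (-g) := by
    have e1 : (m₁:ℝ) * (a * L / n * (1 / u - 1)) = ρ₁ * a * L * (1 / u - 1) := by
      rw [← hm1p]; ring
    have e2 : (m₂:ℝ) * (b * L / n * (u - 1)) = ρ₂ * b * L * (u - 1) := by
      rw [← hm2q]; ring
    rw [e1, e2, hkL, hg, ht2]
    linear_combination L * hAid + L * hBid
  rw [hE]
  rw [Real.rpow_def_of_pos hn0]
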